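/- Let $(\Lambda, \mathcal{B}_\Lambda, \mu_\Lambda)$ and $(\mathcal{D}, \mathcal{B}_\mathcal{D}, \mu_\mathcal{D})$ be measure spaces, $Q : \Lambda \to \mathcal{D}$ a measurable map, $P^{prior}$ a probability measure on $\Lambda$ with density $\pi^{prior}$ w.r.t. $\mu_\Lambda$, and suppose the push-forward measure $Q_* P^{prior}$ has density $\pi^{Q(prior)}$ w.r.t. $\mu_\mathcal{D}$. If $\pi^{obs}$ is a probability density on $\mathcal{D}$ that is absolutely continuous with respect to $\pi^{Q(prior)}$ (i.e., $\pi^{obs}(q) = 0$ whenever $\pi^{Q(prior)}(q) = 0$), then the function $\pi^{post}(\lambda) = \pi^{prior}(\lambda) \cdot \pi^{obs}(Q(\lambda)) / \pi^{Q(prior)}(Q(\lambda))$ integrates to $1$ over $\Lambda$ with respect to $\mu_\Lambda$, hence defines a probability density. -/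

import Mathlib

open MeasureTheory ENNReal

/-- Normalization of the consistent Bayesian posterior density: if the observed density
is absolutely continuous w.r.t. the push-forward density of the prior, then
`πprior * (πobs ∘ Q) / (πQ ∘ Q)` integrates to one. -/
theorem consistent_posterior_is_density
    {Λ D : Type*} [MeasurableSpace Λ] [MeasurableSpace D]
    (μΛ : Measure Λ) (μD : Measure D)
    (Q : Λ → D) (hQ : Measurable Q)
    (πprior : Λ → ℝ≥0∞) (hπprior : Measurable πprior)
    (hprior1 : ∫⁻ l, πprior l ∂μΛ = 1)
    (πQ : D → ℝ≥0∞) (hπQ : Measurable πQ)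
    (hpush : Measure.map Q (μΛ.withDensity πprior) = μD.withDensity πQ)
    (πobs : D → ℝ≥0∞) (hπobs : Measurable πobs)
    (hobs1 : ∫⁻ q, πobs q ∂μD = 1)
    (habs : ∀ q, πQ q = 0 → πobs q = 0) :
    ∫⁻ l, πprior l * (πobs (Q l) / πQ (Q l)) ∂μΛ = 1 := by
  have hg : Measurable fun q => πobs q / πQ q := hπobs.div hπQ
  have h1 : ∫⁻ l, πprior l * (πobs (Q l) / πQ (Q l)) ∂μΛ
      = ∫⁻ q, πobs q / πQ q ∂(μD.withDensity πQ) := by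
    have h2 := lintegral_withDensity_eq_lintegral_mul μΛ hπprior (hg.comp hQ)
    simp only [Function.comp, Pi.mul_apply] at h2
    rw [← hpush, lintegral_map hg hQ, h2]
  rw [h1, lintegral_withDensity_eq_lintegral_mul μD hπQ hg]
  have hπQ1 : ∫⁻ q, πQ q ∂μD = 1 := by
    have := congrArg (fun m : Measure D => m Set.univ) hpush
    simpa [Measure.map_apply hQ MeasurableSet.univ, withDensity_apply, hprior1] using this.symm
  have hfin : ∀ᵐ q ∂μD, πQ q ≠ ∞ := ae_lt_top hπQ (hπQ1 ▸ one_ne_top) |>.mono fun q h => h.ne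
  have hae : (πQ * fun q => πobs q / πQ q) =ᵐ[μD] πobs := by
    filter_upwards [hfin] with q hfin
    by_cases h0 : πQ q = 0
    · simp [Pi.mul_apply, h0, habs q h0]
    · simp [Pi.mul_apply, ENNReal.mul_div_cancel h0 hfin]
  rw [lintegral_congr_ae hae, hobs1]
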